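/- Let G be a finite group. The submonoid B(G) of product-one sequences is saturated in the free abelian monoid F(G) — i.e., whenever S is a product-one sequence over G and T is a product-one sequence that is a subsequence of S, the complementary subsequence T^{-1}·S is again a product-one sequence — if and only if G is abelian. (Since a saturated submonoid of a free abelian monoid is Krull, this says B(G) is a Krull monoid if and only if G is abelian.) -/

import Mathlib

/-- `S` is a product-one sequence over `G`: some ordering of its terms multiplies to `1`. -/
def IsProductOne {G : Type*} [Group G] (S : Multiset G) : Prop :=
  ∃ l : List G, (l : Multiset G) = S ∧ l.prod = 1

/-- The set of products `π(S)` of all orderings of the terms of `S`. -/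
def piSet {G : Type*} [Group G] (S : Multiset G) : Set G :=
  {g | ∃ l : List G, (l : Multiset G) = S ∧ l.prod = g}

/-- The set `Π(S)` of products of nontrivial subsequences of `S`. -/
def subseqProds {G : Type*} [Group G] (S : Multiset G) : Set G :=
  {g | ∃ T : Multiset G, T ≤ S ∧ T ≠ 0 ∧ g ∈ piSet T}

/-- `S` is product-one free. -/
def ProductOneFree {G : Type*} [Group G] (S : Multiset G) : Prop :=
  (1 : G) ∉ subseqProds S

/-- `S` is an atom of the monoid `B(G)` of product-one sequences: it is a nontrivial
product-one sequence that is not the concatenation of two nontrivial product-one sequences. -/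
def IsPOAtom {G : Type*} [Group G] (S : Multiset G) : Prop :=
  IsProductOne S ∧ S ≠ 0 ∧
    ∀ T₁ T₂ : Multiset G, IsProductOne T₁ → IsProductOne T₂ → T₁ + T₂ = S →
      T₁ = 0 ∨ T₂ = 0

/-- The large Davenport constant `D(G)`: the supremum of lengths of atoms of `B(G)`. -/
noncomputable def largeD (G : Type*) [Group G] : ℕ :=
  sSup {n : ℕ | ∃ S : Multiset G, IsPOAtom S ∧ Multiset.card S = n}

/-- The small Davenport constant `d(G)`: the supremum of lengths of product-one free
sequences over `G`. -/
noncomputable def smalld (G : Type*) [Group G] : ℕ :=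
  sSup {n : ℕ | ∃ S : Multiset G, ProductOneFree S ∧ Multiset.card S = n}

/-- For a finite group `G`, the submonoid `B(G)` of product-one sequences is saturated in
the free abelian monoid `F(G)` (whenever a product-one sequence `T` is a subsequence of a
product-one sequence `S`, the complement `S - T` is again product-one) if and only if `G`
is abelian. -/
theorem stmt5 {G : Type*} [Group G] [Finite G] [DecidableEq G] :
    (∀ S T : Multiset G, IsProductOne S → IsProductOne T → T ≤ S →
        IsProductOne (S - T)) ↔
      (∀ a b : G, a * b = b * a) := by
  constructor
  · intro h a b
    by_contra hne
    set x := a * b⁻¹ * a⁻¹ with hx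
    have hS : IsProductOne ((([a, a⁻¹] : List G) : Multiset G) + (([b, x] : List G) : Multiset G)) := by
      refine ⟨[a, b, a⁻¹, x], ?_, by
        simp only [List.prod_cons, List.prod_nil, hx]; group⟩
      rw [Multiset.coe_add, Multiset.coe_eq_coe]
      exact .cons a (.swap _ _ _)
    have hT : IsProductOne ((([a, a⁻¹] : List G) : Multiset G)) := ⟨[a, a⁻¹], rfl, by simp⟩
    have hU := h _ _ hS hT (Multiset.le_add_right _ _)
    rw [add_tsub_cancel_left] at hU
    obtain ⟨l, hl, hp⟩ := hU
    have hperm : l.Perm [b, x] := Multiset.coe_eq_coe.mp hl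
    have hcases : l = [b, x] ∨ l = [x, b] := by
      have h2 := hperm.length_eq
      match l, h2 with
      | [c, d], _ =>
        have hml : (c ::ₘ {d} : Multiset G) = (b ::ₘ {x}) := hl
        rcases Multiset.cons_eq_cons.mp hml with ⟨rfl, h2⟩ | ⟨_, cs, h1, h2⟩
        · left
          rw [Multiset.singleton_inj] at h2
          rw [h2]
        · right
          have hcs : cs = 0 ∧ d = b := by
            constructor
            · have := congrArg Multiset.card h1
              simp at this
              exact this
            · have hc0 : cs = 0 := by
                have := congrArg Multiset.card h1
                simp at this
                exact this
              rw [hc0] at h1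
              simpa using h1

          obtain ⟨hc0, rfl⟩ := hcs
          rw [hc0] at h2
          have : c = x := by simpa using h2.symm
          rw [this]
    rcases hcases with rfl | rfl
    · simp only [List.prod_cons, List.prod_nil, mul_one, hx] at hp
      open scoped commutatorElement in
      have hcomm : ⁅b, a⁆ = 1 := by
        rw [commutatorElement_def]
        calc b * a * b⁻¹ * a⁻¹ = b * (a * b⁻¹ * a⁻¹) := by group
          _ = 1 := hp
      exact hne ((commutatorElement_eq_one_iff_commute.mp hcomm).symm.eq)
    · simp only [List.prod_cons, List.prod_nil, mul_one, hx] at hp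
      open scoped commutatorElement in
      have hcomm : ⁅a, b⁻¹⁆ = 1 := by
        rw [commutatorElement_def, inv_inv]
        calc a * b⁻¹ * a⁻¹ * b = a * b⁻¹ * a⁻¹ * b := by group
          _ = 1 := hp
      have hc := commutatorElement_eq_one_iff_commute.mp hcomm
      have hc2 := hc.inv_right
      rw [inv_inv] at hc2
      exact hne hc2.eq
  · intro hcomm S T hS hT hle
    obtain ⟨lS, hlS, hpS⟩ := hS
    obtain ⟨lT, hlT, hpT⟩ := hT
    obtain ⟨lU, hlU⟩ : ∃ lU : List G, (lU : Multiset G) = S - T :=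
      ⟨(S - T).toList, (S - T).coe_toList⟩
    refine ⟨lU, hlU, ?_⟩
    have hperm : (lT ++ lU).Perm lS := by
      rw [← Multiset.coe_eq_coe, ← Multiset.coe_add, hlT, hlU, hlS,
        add_tsub_cancel_of_le hle]
    have hpair : (lT ++ lU).Pairwise Commute :=
      List.pairwise_of_forall_mem_list fun u _ v _ => hcomm u v
    have := hperm.prod_eq' hpair
    rw [List.prod_append, hpT, one_mul, hpS] at this
    exact this
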